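/- Let P be a projection algebra, let F be the free semigroup on the alphabet X_P = {x_p : p ∈ P}, let ∼ be the semigroup congruence on F generated by the relations x_p² = x_p, (x_p x_q)² = x_p x_q, and x_p x_q x_p = x_{qθ_p} for all p, q ∈ P, and let T = F/∼. Then: (a) there is a unary operation * on T satisfying [x_{p₁}⋯x_{p_k}]* = [x_{p_k}⋯x_{p₁}] for every word x_{p₁}⋯x_{p_k}, and with this operation T is a regular *-semigroup (a** = a, a a* a = a, (ab)* = b* a* for all a, b ∈ T); (b) the map ι : P → T, p ↦ [x_p], is injective; (c) the image of ι is exactly the set of projections of T, i.e. the set of t ∈ T with t² = t = t*; (d) ι(p)ι(q)ι(p) = ι(qθ_p) for all p, q ∈ P, so ι is an isomorphism from P onto the projection algebra of T. -/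

import Mathlib

structure ProjectionAlgebra (P : Type*) where
  th : P → P → P
  P1 : ∀ p, th p p = p
  P2 : ∀ p q, th p (th p q) = th p q
  P3 : ∀ p q, th p (th q p) = th p q
  P4 : ∀ p q r, th p (th q (th p r)) = th (th p q) r
  P5 : ∀ p q r, th q (th p (th q (th p r))) = th q (th p r)

namespace ProjectionAlgebra

variable {P : Type*} (A : ProjectionAlgebra P)

/-- `p ≤ q` iff `p = pθ_q`. -/
def le (p q : P) : Prop := p = A.th q p

/-- `p ≤F q` iff `p = qθ_p`. -/
def leF (p q : P) : Prop := p = A.th p q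

/-- `p F q` iff `p ≤F q` and `q ≤F p`. -/
def Frel (p q : P) : Prop := A.leF p q ∧ A.leF q p

/-- `(e, f)` is a `p`-linked pair: `f = eθ_pθ_f` and `e = fθ_pθ_e`. -/
def Linked (p e f : P) : Prop :=
  f = A.th f (A.th p e) ∧ e = A.th e (A.th p f)

/-- `q θ_{p₁} ⋯ θ_{p_k}` for the list `ps = [p₁, …, p_k]`. -/
def applyList (q : P) (ps : List P) : P := ps.foldl (fun x p => A.th p x) q

end ProjectionAlgebra

/-- The defining relations of the free projection-generated regular *-semigroup
`PG(P)`: `x_p² = x_p`, `(x_p x_q)² = x_p x_q`, and `x_p x_q x_p = x_{qθ_p}`,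
for `p, q ∈ P`, as a binary relation on the free semigroup over `P`. -/
def PGrel {P : Type*} (A : ProjectionAlgebra P) :
    FreeSemigroup P → FreeSemigroup P → Prop := fun u v =>
  (∃ p : P, u = FreeSemigroup.of p * FreeSemigroup.of p ∧ v = FreeSemigroup.of p) ∨
  (∃ p q : P, u = (FreeSemigroup.of p * FreeSemigroup.of q) *
      (FreeSemigroup.of p * FreeSemigroup.of q) ∧
    v = FreeSemigroup.of p * FreeSemigroup.of q) ∨
  (∃ p q : P, u = FreeSemigroup.of p * FreeSemigroup.of q * FreeSemigroup.of p ∧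
    v = FreeSemigroup.of (A.th p q))

/-- The word `x_h x_{t₁} ⋯ x_{t_m}` in the free semigroup. -/
def word1 {P : Type*} (h : P) (t : List P) : FreeSemigroup P :=
  t.foldl (fun w p => w * FreeSemigroup.of p) (FreeSemigroup.of h)

/-- The reversed word `x_{t_m} ⋯ x_{t₁} x_h` in the free semigroup. -/
def word1r {P : Type*} (h : P) (t : List P) : FreeSemigroup P :=
  t.foldl (fun w p => FreeSemigroup.of p * w) (FreeSemigroup.of h)



namespace Stmt14Aux

open FreeSemigroup MulOpposite

/-- Word reversal on the free semigroup. -/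
def rev {P : Type*} : FreeSemigroup P → FreeSemigroup P := fun w =>
  unop (FreeSemigroup.lift (fun p => op (FreeSemigroup.of p)) w)

@[simp] lemma rev_of {P : Type*} (p : P) : rev (of p) = of p := by
  simp [rev]

@[simp] lemma rev_mul {P : Type*} (u v : FreeSemigroup P) :
    rev (u * v) = rev v * rev u := by
  simp [rev]

@[simp] lemma rev_rev {P : Type*} (w : FreeSemigroup P) : rev (rev w) = w :=
  FreeSemigroup.recOnMul w (fun p => by simp) (fun x y hx hy => by simp [hx, hy])

/-- Iterated collapse of a word to a single projection. -/
def cw {P : Type*} (A : ProjectionAlgebra P) : P → List P → P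
  | h, [] => h
  | h, q :: t => A.th h (cw A q t)

@[simp] lemma cw_nil {P : Type*} (A : ProjectionAlgebra P) (h : P) : cw A h [] = h := rfl

@[simp] lemma cw_cons {P : Type*} (A : ProjectionAlgebra P) (h q : P) (t : List P) :
    cw A h (q :: t) = A.th h (cw A q t) := rfl

variable {P : Type*} (A : ProjectionAlgebra P)

/-- The quotient semigroup. -/
abbrev TQ := (conGen (PGrel A)).Quotient

/-- The canonical map. -/
abbrev ι (p : P) : TQ A := ↑(FreeSemigroup.of p)

lemma rel1 (p : P) : ι A p * ι A p = ι A p := by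
  have h : ((FreeSemigroup.of p * FreeSemigroup.of p : FreeSemigroup P) : TQ A)
      = ↑(FreeSemigroup.of p) :=
    (Con.eq _).2 (ConGen.Rel.of _ _ (Or.inl ⟨p, rfl, rfl⟩))
  rwa [Con.coe_mul] at h

lemma rel2 (p q : P) : (ι A p * ι A q) * (ι A p * ι A q) = ι A p * ι A q := by
  have h : (((FreeSemigroup.of p * FreeSemigroup.of q) *
        (FreeSemigroup.of p * FreeSemigroup.of q) : FreeSemigroup P) : TQ A)
      = ↑(FreeSemigroup.of p * FreeSemigroup.of q) :=
    (Con.eq _).2 (ConGen.Rel.of _ _ (Or.inr (Or.inl ⟨p, q, rfl, rfl⟩)))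
  simp only [Con.coe_mul] at h
  exact h

lemma rel3 (p q : P) : ι A p * ι A q * ι A p = ι A (A.th p q) := by
  have h : ((FreeSemigroup.of p * FreeSemigroup.of q * FreeSemigroup.of p :
        FreeSemigroup P) : TQ A) = ↑(FreeSemigroup.of (A.th p q)) :=
    (Con.eq _).2 (ConGen.Rel.of _ _ (Or.inr (Or.inr ⟨p, q, rfl, rfl⟩)))
  simp only [Con.coe_mul] at h
  exact h

lemma pair2 (p q : P) : ι A (A.th p q) * ι A q = ι A p * ι A q := by
  rw [← rel3, mul_assoc (ι A p * ι A q)]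
  exact rel2 A p q

lemma absorbR (a f : P) (h : A.th a f = f) : ι A f * ι A a = ι A f := by
  conv_lhs => rw [← h, ← rel3]
  rw [mul_assoc, rel1, rel3, h]

lemma rel_rev {u v : FreeSemigroup P} (h : ConGen.Rel (PGrel A) u v) :
    ConGen.Rel (PGrel A) (rev u) (rev v) := by
  induction h with
  | of u v h =>
    apply ConGen.Rel.of
    rcases h with ⟨p, rfl, rfl⟩ | ⟨p, q, rfl, rfl⟩ | ⟨p, q, rfl, rfl⟩
    · exact Or.inl ⟨p, by simp, by simp⟩
    · exact Or.inr (Or.inl ⟨q, p, by simp, by simp⟩)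
    · exact Or.inr (Or.inr ⟨p, q, by simp [mul_assoc], by simp⟩)
  | refl x => exact ConGen.Rel.refl _
  | symm _ ih => exact ih.symm
  | trans _ _ ih1 ih2 => exact ih1.trans ih2
  | mul _ _ ih1 ih2 => rw [rev_mul, rev_mul]; exact ConGen.Rel.mul ih2 ih1

/-- The star (involution) on the quotient. -/
def st : TQ A → TQ A := fun a =>
  Con.liftOn a (fun w => (↑(rev w) : TQ A)) fun _ _ h => (Con.eq _).2 (rel_rev A h)

lemma st_coe (w : FreeSemigroup P) : st A ↑w = (↑(rev w) : TQ A) := rfl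

lemma st_mul (a b : TQ A) : st A (a * b) = st A b * st A a :=
  Con.induction_on₂ a b fun u v => by
    rw [← Con.coe_mul, st_coe, st_coe, st_coe, rev_mul, Con.coe_mul]

lemma st_st (a : TQ A) : st A (st A a) = a :=
  Con.induction_on a fun w => by rw [st_coe, st_coe, rev_rev]

lemma st_of (p : P) : st A (↑(FreeSemigroup.of p) : TQ A) = ↑(FreeSemigroup.of p) := by
  rw [st_coe, rev_of]

lemma mk_cons (h q : P) (t : List P) :
    FreeSemigroup.mk h (q :: t) = of h * FreeSemigroup.mk q t := rfl

lemma collapse : ∀ (t : List P) (h : P),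
    (↑(FreeSemigroup.mk h t) : TQ A) * st A ↑(FreeSemigroup.mk h t)
      = ι A (cw A h t) := by
  intro t
  induction t with
  | nil =>
    intro h
    rw [show FreeSemigroup.mk h [] = of h from rfl, st_of]
    exact rel1 A h
  | cons q t ih =>
    intro h
    calc (↑(FreeSemigroup.mk h (q :: t)) : TQ A) * st A ↑(FreeSemigroup.mk h (q :: t))
        = (ι A h * ↑(FreeSemigroup.mk q t)) *
            (st A ↑(FreeSemigroup.mk q t) * ι A h) := by
          rw [mk_cons, Con.coe_mul, st_mul, st_of]
      _ = ι A h * ((↑(FreeSemigroup.mk q t) * st A ↑(FreeSemigroup.mk q t)) * ι A h) := by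
          rw [mul_assoc, ← mul_assoc (↑(FreeSemigroup.mk q t) : TQ A)]
      _ = ι A h * (ι A (cw A q t) * ι A h) := by rw [ih]
      _ = ι A (A.th h (cw A q t)) := by rw [← mul_assoc]; exact rel3 A h (cw A q t)
      _ = ι A (cw A h (q :: t)) := by rw [cw_cons]

lemma head_lemma : ∀ (t : List P) (h : P),
    ι A (cw A h t) * ↑(FreeSemigroup.mk h t) = (↑(FreeSemigroup.mk h t) : TQ A) := by
  intro t
  induction t with
  | nil => intro h; exact rel1 A h
  | cons q t ih =>
    intro h
    rw [mk_cons, Con.coe_mul, cw_cons]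
    calc ι A (A.th h (cw A q t)) * (ι A h * ↑(FreeSemigroup.mk q t))
        = (ι A (A.th h (cw A q t)) * ι A h) * ↑(FreeSemigroup.mk q t) := by
          rw [← mul_assoc]
      _ = ι A (A.th h (cw A q t)) * ↑(FreeSemigroup.mk q t) := by
          rw [absorbR A h _ (A.P2 h (cw A q t))]
      _ = ι A (A.th h (cw A q t)) * (ι A (cw A q t) * ↑(FreeSemigroup.mk q t)) := by
          conv_lhs => rw [← ih q]
      _ = (ι A (A.th h (cw A q t)) * ι A (cw A q t)) * ↑(FreeSemigroup.mk q t) := by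
          rw [mul_assoc]
      _ = (ι A h * ι A (cw A q t)) * ↑(FreeSemigroup.mk q t) := by
          rw [pair2]
      _ = ι A h * (ι A (cw A q t) * ↑(FreeSemigroup.mk q t)) := by rw [mul_assoc]
      _ = ι A h * ↑(FreeSemigroup.mk q t) := by rw [ih q]

lemma regular (a : TQ A) : a * st A a * a = a := by
  refine Con.induction_on a fun w => ?_
  obtain ⟨h, t⟩ := w
  rw [collapse A t h]
  exact head_lemma A t h

/-- Action of a word on `P` by composing the `θ` maps. -/
def endHom : FreeSemigroup P →ₙ* (Function.End P)ᵐᵒᵖ :=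
  FreeSemigroup.lift fun p => op (A.th p : Function.End P)

lemma endHom_rel {u v : FreeSemigroup P} (h : PGrel A u v) :
    endHom A u = endHom A v := by
  rcases h with ⟨p, rfl, rfl⟩ | ⟨p, q, rfl, rfl⟩ | ⟨p, q, rfl, rfl⟩ <;>
    · apply unop_injective
      simp only [endHom, map_mul, FreeSemigroup.lift_of, unop_mul, unop_op]
      funext r
      first
      | exact A.P2 p r
      | exact A.P5 p q r
      | exact A.P4 p q r

lemma endHom_con {u v : FreeSemigroup P} (h : ConGen.Rel (PGrel A) u v) :
    endHom A u = endHom A v := by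
  induction h with
  | of u v h => exact endHom_rel A h
  | refl x => rfl
  | symm _ ih => exact ih.symm
  | trans _ _ ih1 ih2 => exact ih1.trans ih2
  | mul _ _ ih1 ih2 => rw [map_mul, map_mul, ih1, ih2]

lemma iota_injective :
    Function.Injective (fun p : P => (↑(FreeSemigroup.of p) : TQ A)) := by
  intro p q h
  have h2 : endHom A (of p) = endHom A (of q) := endHom_con A ((Con.eq _).1 h)
  have h3 : (A.th p : Function.End P) = A.th q := by
    have := congrArg unop h2
    exact this
  have hpq : ∀ r, A.th p r = A.th q r := fun r => congrFun h3 r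
  have e1 : A.th q p = p := by rw [← hpq p, A.P1]
  have e2 : A.th p q = q := by rw [hpq q, A.P1]
  have e3 := A.P3 p q
  rw [e1, e2, A.P1] at e3
  exact e3

lemma rev_foldl : ∀ (t : List P) (w : FreeSemigroup P),
    rev (t.foldl (fun w p => w * of p) w) = t.foldl (fun w p => of p * w) (rev w) := by
  intro t
  induction t with
  | nil => intro w; rfl
  | cons p t ih => intro w; rw [List.foldl_cons, List.foldl_cons, ih, rev_mul, rev_of]

lemma st_word1 (h : P) (t : List P) :
    st A ↑(word1 h t) = (↑(word1r h t) : TQ A) := by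
  rw [st_coe, word1, word1r, rev_foldl, rev_of]

end Stmt14Aux

/-- Let `T = X_P⁺/∼` be the quotient of the free semigroup on
`X_P = {x_p : p ∈ P}` by the congruence `∼` generated by `x_p² = x_p`,
`(x_p x_q)² = x_p x_q`, `x_p x_q x_p = x_{qθ_p}`.  Then:
(a) there is a unary operation `*` on `T` with `[x_{p₁}⋯x_{p_k}]* = [x_{p_k}⋯x_{p₁}]`
making `T` a regular *-semigroup;
(b) `ι : P → T`, `p ↦ [x_p]`, is injective;
(c) the image of `ι` is exactly the set of projections of `T`;
(d) `ι(p) ι(q) ι(p) = ι(qθ_p)`, so `ι` is an isomorphism of `P` onto the projection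
algebra of `T`. -/
theorem stmt14 {P : Type*} (A : ProjectionAlgebra P) :
    ∃ st : (conGen (PGrel A)).Quotient → (conGen (PGrel A)).Quotient,
      -- (a) the involution reverses words and makes `T` a regular *-semigroup
      (∀ (h : P) (t : List P),
        st ↑(word1 h t) = (↑(word1r h t) : (conGen (PGrel A)).Quotient)) ∧
      (∀ a, st (st a) = a) ∧
      (∀ a, a * st a * a = a) ∧
      (∀ a b, st (a * b) = st b * st a) ∧
      -- (b) `ι` is injective
      Function.Injective
        (fun p : P => (↑(FreeSemigroup.of p) : (conGen (PGrel A)).Quotient)) ∧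
      -- (c) the image of `ι` is the set of projections of `T`
      {t : (conGen (PGrel A)).Quotient | t * t = t ∧ st t = t}
        = Set.range
            (fun p : P => (↑(FreeSemigroup.of p) : (conGen (PGrel A)).Quotient)) ∧
      -- (d) `ι` respects the projection algebra operations
      (∀ p q : P,
        (↑(FreeSemigroup.of p) : (conGen (PGrel A)).Quotient) *
            ↑(FreeSemigroup.of q) * ↑(FreeSemigroup.of p)
          = ↑(FreeSemigroup.of (A.th p q))) := by
  
  refine ⟨Stmt14Aux.st A, Stmt14Aux.st_word1 A, Stmt14Aux.st_st A, Stmt14Aux.regular A,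
    Stmt14Aux.st_mul A, Stmt14Aux.iota_injective A, ?_, Stmt14Aux.rel3 A⟩
  ext t
  simp only [Set.mem_setOf_eq, Set.mem_range]
  constructor
  · intro ht
    refine Con.induction_on
      (C := fun t => t * t = t ∧ Stmt14Aux.st A t = t →
        ∃ p : P, (↑(FreeSemigroup.of p) : (conGen (PGrel A)).Quotient) = t) t ?_ ht
    rintro ⟨h, tl⟩ ⟨hid, hst⟩
    refine ⟨Stmt14Aux.cw A h tl, ?_⟩
    have hc := Stmt14Aux.collapse A tl h
    rw [hst, hid] at hc
    exact hc.symm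
  · rintro ⟨p, rfl⟩
    exact ⟨Stmt14Aux.rel1 A p, Stmt14Aux.st_of A p⟩
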